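/- Suppose C*(X,Y,Z,W) = 0 for all X,Y,Z,W ∈ V with a ≠ 0, and suppose the Ricci tensor has the form S(X,Z) = α̃ T(X)T(Z) for all X,Z ∈ V, where α̃ is a scalar and T is a linear functional on V. Then R̄ is of quasi-constant curvature form: R̄(X,Y,Z,W) = l[g(Y,Z)g(X,W) − g(X,Z)g(Y,W)] + δ[g(X,W)T(Y)T(Z) − g(X,Z)T(Y)T(W) + g(Y,Z)T(X)T(W) − g(Y,W)T(X)T(Z)] for all X,Y,Z,W ∈ V, where l = (r/n)(1/(n−1) + 2b/a) and δ = −(b/a)α̃. -/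

import Mathlib

open scoped RealInnerProductSpace

theorem stmt10
    {V : Type*} [NormedAddCommGroup V] [InnerProductSpace ℝ V]
    (n : ℕ) (hn : 3 < n)
    (e : Module.Basis (Fin n) ℝ V) (he : Orthonormal ℝ e)
    (Rb : V → V → V → V → ℝ)
    (hlin1 : ∀ (c : ℝ) (X X' Y Z W : V),
      Rb (c • X + X') Y Z W = c * Rb X Y Z W + Rb X' Y Z W)
    (hlin2 : ∀ (c : ℝ) (X Y Y' Z W : V),
      Rb X (c • Y + Y') Z W = c * Rb X Y Z W + Rb X Y' Z W)
    (hlin3 : ∀ (c : ℝ) (X Y Z Z' W : V),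
      Rb X Y (c • Z + Z') W = c * Rb X Y Z W + Rb X Y Z' W)
    (hlin4 : ∀ (c : ℝ) (X Y Z W W' : V),
      Rb X Y Z (c • W + W') = c * Rb X Y Z W + Rb X Y Z W')
    (hskew1 : ∀ X Y Z W : V, Rb X Y Z W = - Rb Y X Z W)
    (hskew2 : ∀ X Y Z W : V, Rb X Y Z W = - Rb X Y W Z)
    (hpair : ∀ X Y Z W : V, Rb X Y Z W = Rb Z W X Y)
    (S : V → V → ℝ) (hS : ∀ Y Z : V, S Y Z = ∑ i, Rb (e i) Y Z (e i))
    (r : ℝ) (hr : r = ∑ i, S (e i) (e i))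
    (a b : ℝ)
    (Cs : V → V → V → V → ℝ)
    (hC : ∀ X Y Z W : V, Cs X Y Z W =
      a * Rb X Y Z W
      + b * (S Y Z * ⟪X, W⟫ - S X Z * ⟪Y, W⟫
             + ⟪Y, Z⟫ * S X W - ⟪X, Z⟫ * S Y W)
      - (r / n) * (a / ((n : ℝ) - 1) + 2 * b)
        * (⟪Y, Z⟫ * ⟪X, W⟫ - ⟪X, Z⟫ * ⟪Y, W⟫))
    (ha : a ≠ 0)
    (hflat : ∀ X Y Z W : V, Cs X Y Z W = 0)
    (T : V →ₗ[ℝ] ℝ) (αt : ℝ)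
    (hRic : ∀ X Z : V, S X Z = αt * T X * T Z) :
    ∀ X Y Z W : V, Rb X Y Z W =
      (r / n) * (1 / ((n : ℝ) - 1) + 2 * b / a)
        * (⟪Y, Z⟫ * ⟪X, W⟫ - ⟪X, Z⟫ * ⟪Y, W⟫)
      + (-(b / a) * αt)
        * (⟪X, W⟫ * T Y * T Z - ⟪X, Z⟫ * T Y * T W
           + ⟪Y, Z⟫ * T X * T W - ⟪Y, W⟫ * T X * T Z) := by
  intro X Y Z W
  have h := hflat X Y Z W
  rw [hC] at h
  simp only [hRic] at h
  have hn0 : (n : ℝ) ≠ 0 := by positivity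
  have hn1 : (n : ℝ) - 1 ≠ 0 := by
    have : (3 : ℝ) < n := by exact_mod_cast hn
    linarith
  field_simp at h ⊢
  linear_combination h
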